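/- (Necessity of n ≥ m₁ + m₂ − 1.) Let E ∈ ℂ^{n×m₂} form a sub-band structured basis whose supports J_k (of the columns of Ẽ = F_nE) are pairwise disjoint and cover {1,…,n}. Let D ∈ ℂ^{n×m₁} have full column rank m₁, x₀ ∈ ℂ^{m₁} nonzero, and y₀ ∈ ℂ^{m₂} non-vanishing. If (x₀,y₀) is identifiable up to scaling (every (x,y) with (Dx) ⊛ (Ey) = (Dx₀) ⊛ (Ey₀) satisfies x = σx₀, y = σ^{-1}y₀ for some σ ≠ 0), then n ≥ m₁ + m₂ − 1. -/

import Mathlib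

/-- Circular convolution of two vectors in `ℂ^n`. -/
noncomputable def cconv {n : ℕ} (u v : Fin n → ℂ) : Fin n → ℂ :=
  fun i => ∑ j, u j * v (i - j)

/-- The normalized DFT matrix, `(F_n)_{jk} = n^{-1/2} e^{-2πi jk/n}`. -/
noncomputable def dft (n : ℕ) : Fin n → Fin n → ℂ :=
  fun j k => ((Real.sqrt n : ℝ) : ℂ)⁻¹ *
    Complex.exp (-(2 * (Real.pi : ℂ) * Complex.I * ((j : ℕ) : ℂ) * ((k : ℕ) : ℂ)) / (n : ℂ))

/-- Matrix-vector multiplication. -/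
noncomputable def mulVecF {n m : ℕ} (A : Fin n → Fin m → ℂ) (x : Fin m → ℂ) : Fin n → ℂ :=
  fun i => ∑ j, A i j * x j

/-- `J_k`: support of the `k`-th column of `Ẽ = F_nE`. -/
noncomputable def subbandSupport {n m₂ : ℕ} (E : Fin n → Fin m₂ → ℂ) (k : Fin m₂) :
    Set (Fin n) :=
  {i | mulVecF (dft n) (fun r => E r k) i ≠ 0}


open Complex Finset

noncomputable def ch (n : ℕ) (a : ℤ) : ℂ :=
  Complex.exp (-(2 * (Real.pi : ℂ) * Complex.I * (a : ℂ)) / (n : ℂ))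

lemma ch_add (n : ℕ) (a b : ℤ) : ch n (a + b) = ch n a * ch n b := by
  rw [ch, ch, ch, ← Complex.exp_add]
  congr 1
  push_cast
  ring

lemma ch_int_mul (n : ℕ) (hn : n ≠ 0) (m : ℤ) : ch n ((n : ℤ) * m) = 1 := by
  rw [ch]
  have hn' : (n : ℂ) ≠ 0 := Nat.cast_ne_zero.mpr hn
  have : (-(2 * (Real.pi : ℂ) * Complex.I * (((n : ℤ) * m : ℤ) : ℂ)) / (n : ℂ))
      = (-m : ℤ) * (2 * (Real.pi : ℂ) * Complex.I) := by
    push_cast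
    field_simp
  rw [this, Complex.exp_int_mul_two_pi_mul_I]

lemma ch_congr (n : ℕ) (hn : n ≠ 0) {a b : ℤ} (h : (n : ℤ) ∣ a - b) : ch n a = ch n b := by
  obtain ⟨m, hm⟩ := h
  have : a = b + (n : ℤ) * m := by linarith
  rw [this, ch_add, ch_int_mul n hn, mul_one]

lemma ch_eq_one_iff (n : ℕ) (hn : 0 < n) (a : ℤ) : ch n a = 1 ↔ (n : ℤ) ∣ a := by
  rw [ch, Complex.exp_eq_one_iff]
  have hn' : (n : ℂ) ≠ 0 := Nat.cast_ne_zero.mpr hn.ne'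
  have hc : (2 * (Real.pi : ℂ) * Complex.I) ≠ 0 := by
    simp [Real.pi_ne_zero, Complex.I_ne_zero]
  constructor
  · rintro ⟨m, hm⟩
    refine ⟨-m, ?_⟩
    have h2 : (a : ℂ) = ((-m * n : ℤ) : ℂ) := by
      push_cast
      field_simp at hm
      have := hm
      -- hm : -(2 * π * I * a) = m * (2 * π * I) * n
      have h3 : (2 * (Real.pi:ℂ) * Complex.I) * (a:ℂ) = (2 * (Real.pi:ℂ) * Complex.I) * (-m * n) := by
        linear_combination (-(2 * (Real.pi:ℂ) * Complex.I)) * hm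
      exact mul_left_cancel₀ hc h3
    have h4 : a = -m * (n:ℤ) := by exact_mod_cast h2
    linarith
  · rintro ⟨m, rfl⟩
    refine ⟨-m, ?_⟩
    push_cast
    field_simp

lemma ch_sum (n : ℕ) (hn : 0 < n) (a : ℤ) :
    ∑ j : Fin n, ch n (a * (j : ℤ)) = if (n : ℤ) ∣ a then (n : ℂ) else 0 := by
  have hpow : ∀ j : ℕ, ch n (a * (j : ℤ)) = (ch n a) ^ j := by
    intro j
    induction j with
    | zero => simp [ch]
    | succ j ih =>
      push_cast
      rw [mul_add, ch_add, mul_one, pow_succ]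
      rw [← ih]
  have : ∑ j : Fin n, ch n (a * (j : ℤ)) = ∑ j ∈ Finset.range n, (ch n a) ^ j := by
    rw [Fin.sum_univ_eq_sum_range (fun j : ℕ => ch n (a * (j : ℤ)))]
    exact Finset.sum_congr rfl fun j _ => hpow j
  rw [this]
  by_cases hd : (n : ℤ) ∣ a
  · rw [if_pos hd]
    have h1 : ch n a = 1 := (ch_eq_one_iff n hn a).mpr hd
    simp [h1]
  · rw [if_neg hd]
    have h1 : ch n a ≠ 1 := fun h => hd ((ch_eq_one_iff n hn a).mp h)
    rw [geom_sum_eq h1]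
    have : (ch n a) ^ n = 1 := by
      rw [← hpow n]
      have hdvd : (n:ℤ) ∣ a * n - 0 := ⟨a, by ring⟩
      rw [ch_congr n hn.ne' hdvd]
      simp [ch]
    rw [this]
    simp

noncomputable def ft {n : ℕ} (u : Fin n → ℂ) : Fin n → ℂ :=
  fun j => ∑ k : Fin n, ch n ((j : ℤ) * (k : ℤ)) * u k

lemma findvd {n : ℕ} (k l : Fin n) (h : (n : ℤ) ∣ (k : ℤ) - (l : ℤ)) : k = l := by
  obtain ⟨c, hc⟩ := h
  have h1 : ((k : ℕ) : ℤ) < (n : ℤ) := by exact_mod_cast k.isLt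
  have h2 : ((l : ℕ) : ℤ) < (n : ℤ) := by exact_mod_cast l.isLt
  have h3 : (0 : ℤ) ≤ ((k : ℕ) : ℤ) := Int.natCast_nonneg _
  have h4 : (0 : ℤ) ≤ ((l : ℕ) : ℤ) := Int.natCast_nonneg _
  have hn0 : (0 : ℤ) ≤ (n : ℤ) := Int.natCast_nonneg _
  have hc0 : c = 0 := by
    by_contra h0
    have h6 : (1 : ℤ) ≤ |c| := Int.one_le_abs h0
    have h7 : (n : ℤ) * 1 ≤ (n : ℤ) * |c| := mul_le_mul_of_nonneg_left h6 hn0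
    have h8 : |(n : ℤ) * c| = (n : ℤ) * |c| := by
      rw [abs_mul, abs_of_nonneg hn0]
    have h9 : |((k : ℕ) : ℤ) - ((l : ℕ) : ℤ)| < (n : ℤ) := abs_lt.mpr ⟨by omega, by omega⟩
    rw [hc, h8] at h9
    linarith
  rw [hc0, mul_zero] at hc
  have h5 : ((k : ℕ) : ℤ) = ((l : ℕ) : ℤ) := by omega
  exact Fin.ext (by exact_mod_cast h5)

lemma ft_inversion {n : ℕ} (hn : 0 < n) (u : Fin n → ℂ) (l : Fin n) :
    ∑ j : Fin n, ch n (-(l : ℤ) * (j : ℤ)) * ft u j = (n : ℂ) * u l := by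
  simp only [ft, Finset.mul_sum]
  rw [Finset.sum_comm]
  have key : ∀ k : Fin n, ∑ j : Fin n, ch n (-(l : ℤ) * (j : ℤ)) * (ch n ((j : ℤ) * (k : ℤ)) * u k)
      = (if ((n : ℤ) ∣ (k : ℤ) - (l : ℤ)) then (n : ℂ) else 0) * u k := by
    intro k
    simp only [← mul_assoc]
    rw [← Finset.sum_mul, ← ch_sum n hn ((k : ℤ) - (l : ℤ))]
    congr 1
    refine Finset.sum_congr rfl fun j _ => ?_
    rw [← ch_add]
    congr 1
    ring
  rw [Finset.sum_congr rfl fun k _ => key k]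
  rw [Finset.sum_eq_single l]
  · simp
  · intro k _ hkl
    rw [if_neg (fun h => hkl (findvd k l h)), zero_mul]
  · intro h
    exact absurd (Finset.mem_univ l) h

lemma ft_injective {n : ℕ} (hn : 0 < n) : Function.Injective (ft (n := n)) := by
  intro u v h
  funext l
  have h1 := ft_inversion hn u l
  have h2 := ft_inversion hn v l
  rw [h] at h1
  have hn' : (n : ℂ) ≠ 0 := Nat.cast_ne_zero.mpr hn.ne'
  exact mul_left_cancel₀ hn' (h1.symm.trans h2)

lemma dft_eq {n : ℕ} (u : Fin n → ℂ) (j : Fin n) :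
    mulVecF (dft n) u j = ((Real.sqrt n : ℝ) : ℂ)⁻¹ * ft u j := by
  simp only [mulVecF, dft, ft, ch, Finset.mul_sum]
  refine Finset.sum_congr rfl fun k _ => ?_
  rw [mul_assoc]
  congr 2
  push_cast
  ring_nf

lemma ch_val_add {n : ℕ} [NeZero n] (j : Fin n) (l m : Fin n) :
    ch n ((j : ℤ) * ((l + m : Fin n) : ℤ)) = ch n ((j : ℤ) * (l : ℤ)) * ch n ((j : ℤ) * (m : ℤ)) := by
  rw [← ch_add]
  apply ch_congr n (NeZero.ne n)
  have hv : ((l + m : Fin n) : ℕ) = ((l : ℕ) + (m : ℕ)) % n := Fin.val_add l m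
  set a := (l : ℕ) + (m : ℕ) with ha
  have hq : n * (a / n) + a % n = a := Nat.div_add_mod a n
  refine ⟨-((j : ℤ) * ((a / n : ℕ) : ℤ)), ?_⟩
  have hqz : (n : ℤ) * ((a / n : ℕ) : ℤ) + ((a % n : ℕ) : ℤ) = ((l : ℕ) : ℤ) + ((m : ℕ) : ℤ) := by
    exact_mod_cast hq
  have hv2 : (((l + m : Fin n) : ℕ) : ℤ) = ((a % n : ℕ) : ℤ) := by exact_mod_cast hv
  rw [hv2]
  linear_combination (j : ℤ) * hqz

lemma ft_cconv {n : ℕ} [NeZero n] (u v : Fin n → ℂ) (j : Fin n) :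
    ft (cconv u v) j = ft u j * ft v j := by
  have hn : 0 < n := Nat.pos_of_ne_zero (NeZero.ne n)
  simp only [ft, cconv, Finset.mul_sum]
  rw [Finset.sum_comm]
  have key : ∀ l : Fin n, ∑ i : Fin n, ch n ((j : ℤ) * (i : ℤ)) * (u l * v (i - l))
      = (ch n ((j : ℤ) * (l : ℤ)) * u l) * ∑ m : Fin n, ch n ((j : ℤ) * (m : ℤ)) * v m := by
    intro l
    rw [← Equiv.sum_comp (Equiv.addLeft l) (fun i => ch n ((j : ℤ) * (i : ℤ)) * (u l * v (i - l)))]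
    rw [Finset.mul_sum]
    refine Finset.sum_congr rfl fun m _ => ?_
    have hadd : ((Equiv.addLeft l) m : Fin n) = l + m := Equiv.coe_addLeft l ▸ rfl
    have hsub : (Equiv.addLeft l) m - l = m := by
      rw [hadd]; abel
    rw [hsub, hadd, ch_val_add]
    ring
  rw [Finset.sum_congr rfl fun l _ => key l]
  conv_lhs => rw [← Finset.sum_mul]
  rw [← Finset.mul_sum]

noncomputable def matLin {n m : ℕ} (A : Fin n → Fin m → ℂ) :
    (Fin m → ℂ) →ₗ[ℂ] (Fin n → ℂ) where
  toFun x := mulVecF A x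
  map_add' x y := by
    funext i
    simp [mulVecF, mul_add, Finset.sum_add_distrib]
  map_smul' c x := by
    funext i
    simp only [mulVecF, Pi.smul_apply, smul_eq_mul, RingHom.id_apply, Finset.mul_sum]
    exact Finset.sum_congr rfl fun j _ => by ring

noncomputable def diagLin {n m : ℕ} (z : Fin n → ℂ) (κ : Fin n → Fin m) :
    (Fin m → ℂ) →ₗ[ℂ] (Fin n → ℂ) where
  toFun t := fun i => z i * t (κ i)
  map_add' t s := by funext i; simp [mul_add]
  map_smul' c t := by funext i; simp; ring

lemma matLin_injective {n m : ℕ} {A : Fin n → Fin m → ℂ}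
    (h : LinearIndependent ℂ (fun j : Fin m => fun i : Fin n => A i j)) :
    Function.Injective (matLin A) := by
  rw [← LinearMap.ker_eq_bot, LinearMap.ker_eq_bot']
  intro x hx
  have hsum : ∑ j, x j • (fun i : Fin n => A i j) = 0 := by
    funext i
    have hxi : mulVecF A x i = 0 := congrFun hx i
    simpa [mulVecF, Finset.sum_apply, mul_comm] using hxi
  have := Fintype.linearIndependent_iff.mp h x hsum
  funext j
  exact this j

lemma dftLin_injective {n : ℕ} (hn : 0 < n) :
    Function.Injective (matLin (dft n)) := by
  intro u v h
  apply ft_injective hn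
  funext j
  have h1 : mulVecF (dft n) u j = mulVecF (dft n) v j := congrFun h j
  rw [dft_eq, dft_eq] at h1
  have hs : ((Real.sqrt n : ℝ) : ℂ) ≠ 0 := by
    simp only [ne_eq, Complex.ofReal_eq_zero]
    exact (Real.sqrt_pos.mpr (by exact_mod_cast hn)).ne'
  exact mul_left_cancel₀ (inv_ne_zero hs) h1

lemma fv_mulE {n m₂ : ℕ} (E : Fin n → Fin m₂ → ℂ) (κ : Fin n → Fin m₂)
    (h0 : ∀ i k, k ≠ κ i → mulVecF (dft n) (fun r => E r k) i = 0)
    (y : Fin m₂ → ℂ) (i : Fin n) :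
    mulVecF (dft n) (mulVecF E y) i
      = mulVecF (dft n) (fun r => E r (κ i)) i * y (κ i) := by
  show (∑ r, dft n i r * ∑ k, E r k * y k) = _
  have : ∀ r, dft n i r * ∑ k, E r k * y k = ∑ k, (dft n i r * E r k) * y k := by
    intro r
    rw [Finset.mul_sum]
    exact Finset.sum_congr rfl fun k _ => by ring
  rw [Finset.sum_congr rfl fun r _ => this r, Finset.sum_comm]
  rw [Finset.sum_congr rfl fun k _ => (Finset.sum_mul _ _ _).symm]
  rw [Finset.sum_eq_single (κ i)]
  · rfl
  · intro k _ hk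
    have := h0 i k hk
    show (∑ r, dft n i r * E r k) * y k = 0
    rw [show (∑ r, dft n i r * E r k) = mulVecF (dft n) (fun r => E r k) i from rfl, this,
      zero_mul]
  · intro hmem
    exact absurd (Finset.mem_univ _) hmem


/-- Proposition 4.4 (necessity of `n ≥ m₁ + m₂ − 1`): if the sub-bands `J_k` of `E` are
nonempty, pairwise disjoint and cover all frequencies, `D` has full column rank, `x₀ ≠ 0`,
`y₀` is non-vanishing, and `(x₀,y₀)` is identifiable up to scaling, then
`n ≥ m₁ + m₂ − 1`. -/
theorem subband_identifiability_necessary {n m₁ m₂ : ℕ}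
    (E : Fin n → Fin m₂ → ℂ)
    (hne : ∀ k, (subbandSupport E k).Nonempty)
    (hdisj : ∀ k k', k ≠ k' → Disjoint (subbandSupport E k) (subbandSupport E k'))
    (hcover : (⋃ k, subbandSupport E k) = Set.univ)
    (D : Fin n → Fin m₁ → ℂ)
    (hD : LinearIndependent ℂ (fun j : Fin m₁ => fun i : Fin n => D i j))
    (x₀ : Fin m₁ → ℂ) (hx₀ : x₀ ≠ 0)
    (y₀ : Fin m₂ → ℂ) (hy₀ : ∀ k, y₀ k ≠ 0)
    (hident : ∀ x : Fin m₁ → ℂ, ∀ y : Fin m₂ → ℂ,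
      cconv (mulVecF D x) (mulVecF E y) = cconv (mulVecF D x₀) (mulVecF E y₀) →
      ∃ σ : ℂ, σ ≠ 0 ∧ x = σ • x₀ ∧ y = σ⁻¹ • y₀) :
    m₁ + m₂ - 1 ≤ n := by
  classical
  -- m₁ ≤ n from linear independence
  have hm1n : m₁ ≤ n := by
    have := hD.fintype_card_le_finrank
    simpa [Module.finrank_fintype_fun_eq_card] using this
  rcases Nat.eq_zero_or_pos m₂ with hm2 | hm2
  · omega
  by_contra hlt
  push_neg at hlt
  -- n > 0
  have hn : 0 < n := by
    obtain ⟨i, _⟩ := hne ⟨0, hm2⟩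
    exact i.pos
  haveI : NeZero n := ⟨hn.ne'⟩
  -- choose κ
  have hκex : ∀ i : Fin n, ∃ k, i ∈ subbandSupport E k := by
    intro i
    have : i ∈ ⋃ k, subbandSupport E k := by rw [hcover]; trivial
    simpa using this
  choose κ hκmem using hκex
  have hg : ∀ i, mulVecF (dft n) (fun r => E r (κ i)) i ≠ 0 := fun i => hκmem i
  have hFcol0 : ∀ i k, k ≠ κ i → mulVecF (dft n) (fun r => E r k) i = 0 := by
    intro i k hk
    by_contra h
    exact Set.disjoint_left.mp (hdisj k (κ i) hk) h (hκmem i)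
  -- linear maps
  set M : (Fin m₁ → ℂ) →ₗ[ℂ] (Fin n → ℂ) := (matLin (dft n)).comp (matLin D) with hM
  have hMinj : Function.Injective M :=
    (dftLin_injective hn).comp (matLin_injective hD)
  set W := LinearMap.range M with hW
  have hWfr : Module.finrank ℂ W = m₁ := by
    rw [LinearMap.finrank_range_of_inj hMinj, Module.finrank_fintype_fun_eq_card,
      Fintype.card_fin]
  set z₀ : Fin n → ℂ := M x₀ with hz₀
  set T : (Fin m₂ → ℂ) →ₗ[ℂ] (Fin n → ℂ) := diagLin z₀ κ with hT
  set L : (Fin m₂ → ℂ) →ₗ[ℂ] ((Fin n → ℂ) ⧸ W) := W.mkQ.comp T with hL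
  -- 1 is in the kernel of L
  have hone : (fun _ : Fin m₂ => (1 : ℂ)) ∈ LinearMap.ker L := by
    rw [LinearMap.mem_ker, hL, LinearMap.comp_apply, Submodule.mkQ_apply,
      Submodule.Quotient.mk_eq_zero]
    have : T (fun _ => (1 : ℂ)) = z₀ := by
      funext i
      simp [hT, diagLin]
    rw [this]
    exact ⟨x₀, rfl⟩
  -- finrank of ker L ≥ 2
  have hfr1 : Module.finrank ℂ (LinearMap.range L) + Module.finrank ℂ (LinearMap.ker L)
      = m₂ := by
    rw [LinearMap.finrank_range_add_finrank_ker, Module.finrank_fintype_fun_eq_card,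
      Fintype.card_fin]
  have hfrq : Module.finrank ℂ ((Fin n → ℂ) ⧸ W) + m₁ = n := by
    have := Submodule.finrank_quotient_add_finrank W
    rw [hWfr, Module.finrank_fintype_fun_eq_card, Fintype.card_fin] at this
    exact this
  have hfr2 : Module.finrank ℂ (LinearMap.range L)
      ≤ Module.finrank ℂ ((Fin n → ℂ) ⧸ W) := Submodule.finrank_le _
  have hker2 : 2 ≤ Module.finrank ℂ (LinearMap.ker L) := by omega
  -- find u in ker L not in span of 1
  have hspan : ¬ (LinearMap.ker L ≤ Submodule.span ℂ {(fun _ : Fin m₂ => (1 : ℂ))}) := by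
    intro hle
    have h1 : Module.finrank ℂ (Submodule.span ℂ {(fun _ : Fin m₂ => (1 : ℂ))}) = 1 := by
      apply finrank_span_singleton
      intro h
      have := congrFun h ⟨0, hm2⟩
      simp at this
    have := Submodule.finrank_mono hle
    omega
  rw [SetLike.le_def] at hspan
  push_neg at hspan
  obtain ⟨u, huker, huspan⟩ := hspan
  -- choose ε
  obtain ⟨ε, hε⟩ := Infinite.exists_notMem_finset
    (insert (0 : ℂ) (Finset.univ.image fun k => -(u k)⁻¹))
  have hε0 : ε ≠ 0 := fun h => hε (by rw [h]; exact Finset.mem_insert_self _ _)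
  set t : Fin m₂ → ℂ := fun k => 1 + ε * u k with ht
  have ht0 : ∀ k, t k ≠ 0 := by
    intro k h
    have hu : u k ≠ 0 := by
      intro h'
      rw [ht] at h
      simp [h'] at h
    apply hε
    refine Finset.mem_insert_of_mem (Finset.mem_image.mpr ⟨k, Finset.mem_univ _, ?_⟩)
    have : ε * u k = -1 := by
      have := h
      rw [ht] at this
      linear_combination this
    field_simp
    linear_combination -this
  have htker : t ∈ LinearMap.ker L := by
    have : t = (fun _ : Fin m₂ => (1 : ℂ)) + ε • u := by
      funext k; simp [ht]
    rw [this]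
    exact add_mem hone (Submodule.smul_mem _ _ huker)
  -- T t ∈ W, get x
  have hTt : T t ∈ W := by
    rw [LinearMap.mem_ker, hL, LinearMap.comp_apply, Submodule.mkQ_apply,
      Submodule.Quotient.mk_eq_zero] at htker
    exact htker
  obtain ⟨x, hx⟩ := hTt
  set y : Fin m₂ → ℂ := fun k => (t k)⁻¹ * y₀ k with hy
  -- verify the convolution identity
  have hconv : cconv (mulVecF D x) (mulVecF E y) = cconv (mulVecF D x₀) (mulVecF E y₀) := by
    apply ft_injective hn
    funext j
    rw [ft_cconv, ft_cconv]
    -- reduce to mulVecF dft products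
    have hftF : ∀ w : Fin n → ℂ, ft w j = ((Real.sqrt n : ℝ) : ℂ) * mulVecF (dft n) w j := by
      intro w
      rw [dft_eq]
      have hs : ((Real.sqrt n : ℝ) : ℂ) ≠ 0 := by
        simp only [ne_eq, Complex.ofReal_eq_zero]
        exact (Real.sqrt_pos.mpr (by exact_mod_cast hn)).ne'
      field_simp
    rw [hftF, hftF, hftF, hftF]
    have hDx : mulVecF (dft n) (mulVecF D x) = fun i => z₀ i * t (κ i) := by
      have : M x = T t := hx
      exact this
    have hDx₀ : mulVecF (dft n) (mulVecF D x₀) = z₀ := rfl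
    have hEy := fv_mulE E κ hFcol0 y
    have hEy₀ := fv_mulE E κ hFcol0 y₀
    rw [hDx, hDx₀, hEy j, hEy₀ j]
    have htj := ht0 (κ j)
    rw [hy]
    field_simp
  obtain ⟨σ, hσ0, hxσ, hyσ⟩ := hident x y hconv
  -- derive that t is constant
  have htconst : ∀ k, t k = σ := by
    intro k
    have h1 : y k = σ⁻¹ * y₀ k := by rw [hyσ]; rfl
    rw [hy] at h1
    have h2 : (t k)⁻¹ = σ⁻¹ := mul_right_cancel₀ (hy₀ k) h1
    have := congrArg (·⁻¹) h2
    simpa using this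
  apply huspan
  rw [Submodule.mem_span_singleton]
  refine ⟨(σ - 1) * ε⁻¹, ?_⟩
  funext k
  have h3 : 1 + ε * u k = σ := htconst k
  have : u k = (σ - 1) * ε⁻¹ := by
    field_simp
    linear_combination h3
  simp [this]
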